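/- Let f > 0, r ≥ 0, and c ≥ 0 be integers with c + f ≤ 2^r, and let x be an integer with f·2^k ≤ x < f·2^(k+1) for an integer k ≥ 0. Define x' = ⌊x/f⌋·2^r + c + (x mod f). Then 2^(r+k) ≤ x' < 2^(r+k+1). -/

import Mathlib

theorem rans_fits (f c x r k : ℕ) (hf : 0 < f) (hcf : c + f ≤ 2 ^ r)
    (h1 : f * 2 ^ k ≤ x) (h2 : x < f * 2 ^ (k + 1)) :
    2 ^ (r + k) ≤ x / f * 2 ^ r + c + x % f ∧
      x / f * 2 ^ r + c + x % f < 2 ^ (r + k + 1) := by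
  have hq1 : 2 ^ k ≤ x / f := Nat.le_div_iff_mul_le hf |>.mpr (by linarith [h1])
  have hq2 : x / f < 2 ^ (k + 1) := Nat.div_lt_iff_lt_mul hf |>.mpr (by linarith [h2])
  have hq2' : x / f ≤ 2 ^ (k + 1) - 1 := Nat.le_sub_one_of_lt hq2
  have hm : x % f < f := Nat.mod_lt _ hf
  constructor
  · calc 2 ^ (r + k) = 2 ^ k * 2 ^ r := by ring
    _ ≤ x / f * 2 ^ r := Nat.mul_le_mul_right _ hq1
    _ ≤ _ := by omega
  · have hle : x / f * 2 ^ r ≤ (2 ^ (k + 1) - 1) * 2 ^ r := Nat.mul_le_mul_right _ hq2'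
    have hr : 2 ^ r ≤ 2 ^ (k + 1) * 2 ^ r :=
      Nat.le_mul_of_pos_left _ (Nat.pow_pos (by norm_num))
    calc x / f * 2 ^ r + c + x % f
        ≤ (2 ^ (k + 1) - 1) * 2 ^ r + c + x % f := by
          exact Nat.add_le_add_right (Nat.add_le_add_right hle c) _
      _ < (2 ^ (k + 1) - 1) * 2 ^ r + 2 ^ r := by
          have : c + x % f < 2 ^ r := by omega
          omega
      _ = 2 ^ (k + 1) * 2 ^ r := by
          rw [Nat.sub_mul, one_mul, Nat.sub_add_cancel hr]
      _ = 2 ^ (r + k + 1) := by ring
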